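/- In the lower-bound phase construction with parameter j < k, any deterministic online algorithm A incurs at least j + 1 evictions per phase: either it pays at least k ≥ j+1 during step (1), or its cache equals {P_1,...,P_k} after step (1) and then each of the j+1 subsequent requests (the request to Q_0 and the j adversarial requests to its just-evicted page) forces an eviction. -/
import Mathlib

lemma hit_eq {A B : Finset ℕ} {x : ℕ} (hcard : A.card = B.card)
    (hsub : B ⊆ insert x A) (hx : x ∈ A) : B = A :=
  Finset.eq_of_subset_of_card_le (by rwa [Finset.insert_eq_self.2 hx] at hsub) hcard.le

lemma miss_evict {A B : Finset ℕ} {x : ℕ} (hcard : A.card = B.card)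
    (hxA : x ∉ A) (hxB : x ∈ B) : ∃ p ∈ A, p ∉ B := by
  by_contra h
  push_neg at h
  have : A = B := Finset.eq_of_subset_of_card_le h hcard.ge
  exact hxA (this ▸ hxB)

theorem online_at_least_j_plus_one_per_phase
    (k j : ℕ) (hk : 1 ≤ k) (hj : j < k)
    (r : ℕ → ℕ) (C : ℕ → Finset ℕ)
    (hrange : ∀ t < k * k + 1 + j, r t ≤ k)
    (hfull : ∀ t, (C t).card = k)
    (hserve : ∀ t < k * k + 1 + j, r t ∈ C (t + 1) ∧ C (t + 1) ⊆ insert (r t) (C t))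
    (hstep1 : ∀ t < k * k, r t = t % k + 1)
    (hstep2 : r (k * k) = 0)
    (hstep3 : ∀ t, k * k ≤ t → t + 1 < k * k + 1 + j →
      ∀ p ∈ C t, p ∉ C (t + 1) → r (t + 1) = p) :
    j + 1 ≤ ((Finset.range (k * k + 1 + j)).filter (fun t => r t ∉ C t)).card := by
  classical
  by_cases hcase : ∀ t, k * k ≤ t → t < k * k + 1 + j → r t ∉ C t
  · have hsub : Finset.Icc (k*k) (k*k+j) ⊆
        (Finset.range (k*k+1+j)).filter (fun t => r t ∉ C t) := by
      intro t ht
      simp only [Finset.mem_Icc] at ht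
      simp only [Finset.mem_filter, Finset.mem_range]
      exact ⟨by omega, hcase t ht.1 (by omega)⟩
    calc j + 1 = (Finset.Icc (k*k) (k*k+j)).card := by rw [Nat.card_Icc]; omega
    _ ≤ _ := Finset.card_le_card hsub
  · push_neg at hcase
    have hex : ∃ t, k*k ≤ t ∧ t < k*k+1+j ∧ r t ∈ C t := hcase
    set t₀ := Nat.find hex with ht₀def
    have hPt₀ := Nat.find_spec hex
    rw [← ht₀def] at hPt₀
    have ht0 : t₀ = k*k := by
      by_contra hne
      have hlt : k*k < t₀ := lt_of_le_of_ne hPt₀.1 (Ne.symm hne)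
      set t := t₀ - 1 with htdef
      have ht1 : t + 1 = t₀ := by omega
      have hmiss : r t ∉ C t := by
        intro hhit
        exact Nat.find_min hex (m := t) (by omega) ⟨by omega, by omega, hhit⟩
      have hserve_t := hserve t (by omega)
      obtain ⟨p, hpC, hpC'⟩ :=
        miss_evict (by rw [hfull t, hfull (t+1)]) hmiss hserve_t.1
      have hr := hstep3 t (by omega) (by omega) p hpC hpC'
      rw [ht1] at hr
      have := hPt₀.2.2
      rw [hr, ← ht1] at this
      exact hpC' this
    have h0 : (0:ℕ) ∈ C (k*k) := by
      have := hPt₀.2.2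
      rwa [ht0, hstep2] at this
    have hkmiss : k ≤ ((Finset.range (k*k)).filter (fun t => r t ∉ C t)).card := by
      by_contra hlt
      push_neg at hlt
      have hround : ∃ i < k, ∀ t, i*k ≤ t → t < i*k + k → r t ∈ C t := by
        by_contra hno
        push_neg at hno
        have himg : Finset.range k ⊆
            ((Finset.range (k*k)).filter (fun t => r t ∉ C t)).image (· / k) := by
          intro i hi
          simp only [Finset.mem_range] at hi
          obtain ⟨t, ht1, ht2, ht3⟩ := hno i hi
          simp only [Finset.mem_image, Finset.mem_filter, Finset.mem_range]
          refine ⟨t, ⟨by nlinarith, ht3⟩, ?_⟩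
          exact Nat.div_eq_of_lt_le ht1 (by rw [Nat.succ_mul]; omega)
        have h1 := Finset.card_le_card himg
        have h2 := Finset.card_image_le (s := (Finset.range (k*k)).filter (fun t => r t ∉ C t))
          (f := (· / k))
        simp only [Finset.card_range] at h1
        omega
      obtain ⟨i, hik, hclean⟩ := hround
      have hik' : i*k + k ≤ k*k := by nlinarith
      have hconst : ∀ d ≤ k, C (i*k + d) = C (i*k) := by
        intro d hd
        induction d with
        | zero => rfl
        | succ n ih =>
          have hhit : r (i*k + n) ∈ C (i*k + n) := hclean _ (by omega) (by omega)
          have hs := hserve (i*k+n) (by omega)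
          have heq := hit_eq (by rw [hfull, hfull]) hs.2 hhit
          rw [show i*k + (n+1) = i*k + n + 1 from rfl, heq, ih (by omega)]
      have hsubIcc : Finset.Icc 1 k ⊆ C (i*k) := by
        intro m hm
        simp only [Finset.mem_Icc] at hm
        have ht : i*k + (m-1) < k*k := by omega
        have hhit := hclean (i*k + (m-1)) (by omega) (by omega)
        have hr := hstep1 (i*k + (m-1)) ht
        have hmod : (i*k + (m-1)) % k = m - 1 := by
          rw [Nat.add_comm, Nat.add_mul_mod_self_right]
          exact Nat.mod_eq_of_lt (by omega)
        rw [hmod] at hr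
        have hrm : r (i*k + (m-1)) = m := by omega
        rw [hrm, hconst (m-1) (by omega)] at hhit
        exact hhit
      have hIcc : C (i*k) = Finset.Icc 1 k :=
        (Finset.eq_of_subset_of_card_le hsubIcc (by rw [hfull, Nat.card_Icc]; omega)).symm
      have hprop : ∀ t, i*k + k ≤ t → t ≤ k*k → C t = Finset.Icc 1 k := by
        intro t
        induction t with
        | zero => intro h1 h2; omega
        | succ n ih =>
          intro h1 h2
          by_cases hn : i*k + k ≤ n
          · have hCn := ih hn (by omega)
            have hhit : r n ∈ C n := by
              rw [hCn, hstep1 n (by omega), Finset.mem_Icc]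
              have := Nat.mod_lt n (show 0 < k by omega)
              omega
            rw [hit_eq (by rw [hfull, hfull]) (hserve n (by omega)).2 hhit, hCn]
          · have hne : n + 1 = i*k + k := by omega
            rw [hne, hconst k le_rfl, hIcc]
      have hfin := hprop (k*k) hik' le_rfl
      rw [hfin] at h0
      simp at h0
    calc j + 1 ≤ k := hj
    _ ≤ ((Finset.range (k*k)).filter (fun t => r t ∉ C t)).card := hkmiss
    _ ≤ _ := Finset.card_le_card
          (Finset.filter_subset_filter _ (Finset.range_subset_range.2 (by omega)))
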